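/- Let a and a' be splitting types of the same rank and the same degree with a > a' (i.e., a ≥ a' in the balancedness partial order and a ≠ a'). Then hom(a,a') − end(a') < 0. -/

import Mathlib

open Finset

/-- Degree of a 1-based integer tuple of rank `n`. -/
def degT (a : ℕ → ℤ) (n : ℕ) : ℤ := ∑ i ∈ Icc 1 n, a i

/-- `a` is weakly increasing on indices `1, …, n` (a splitting type of rank `n`). -/
def Incr (a : ℕ → ℤ) (n : ℕ) : Prop := ∀ i j : ℕ, 1 ≤ i → i ≤ j → j ≤ n → a i ≤ a j

/-- `S(μ,ν) = Σ_{i=ν}^n a_i + Σ_{i=μ}^m b_i − Σ_{i=μ+ν−1}^{m+n} e_i`. -/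
def Sfun (b e a : ℕ → ℤ) (m n μ ν : ℕ) : ℤ :=
  (∑ i ∈ Icc ν n, a i) + (∑ i ∈ Icc μ m, b i) - ∑ i ∈ Icc (μ + ν - 1) (m + n), e i

/-- `A(μ,ν) = a_ν − e_{μ+ν}`. -/
def Afun (e a : ℕ → ℤ) (μ ν : ℕ) : ℤ := a ν - e (μ + ν)

/-- `B(μ,ν) = e_{μ+ν−1} − b_μ`. -/
def Bfun (b e : ℕ → ℤ) (μ ν : ℕ) : ℤ := e (μ + ν - 1) - b μ

/-- `h_μ = min{ν : 1 ≤ ν ≤ n+1, S(μ,ν') < 0 for all ν' with ν < ν' ≤ n+1}`. -/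
noncomputable def hfun (b e a : ℕ → ℤ) (m n μ : ℕ) : ℕ :=
  sInf {ν : ℕ | 1 ≤ ν ∧ ν ≤ n + 1 ∧ ∀ ν', ν < ν' → ν' ≤ n + 1 → Sfun b e a m n μ ν' < 0}

/-- Weak eligibility of a triple `(b,e,a)` of ranks `m, m+n, n`. -/
def WeaklyEligible (b e a : ℕ → ℤ) (m n : ℕ) : Prop :=
  degT a n + degT b m = degT e (m + n) ∧
  (∀ i, 1 ≤ i → i ≤ n → e i ≤ a i) ∧
  (∀ i, 1 ≤ i → i ≤ m → b i ≤ e (n + i))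

/-- The realizability criterion: weakly eligible, and `A(μ,ν) ≥ 0`, `B(μ,ν) ≥ 0`
whenever `1 ≤ μ ≤ m`, `1 ≤ ν ≤ n` and `ν ≥ h_μ`. -/
def RealizCrit (b e a : ℕ → ℤ) (m n : ℕ) : Prop :=
  WeaklyEligible b e a m n ∧
  ∀ μ ν, 1 ≤ μ → μ ≤ m → 1 ≤ ν → ν ≤ n → hfun b e a m n μ ≤ ν →
    0 ≤ Afun e a μ ν ∧ 0 ≤ Bfun b e μ ν

/-- `f ≥ g` in the balancedness partial order (for tuples of rank `n`):
all prefix sums of `f` dominate those of `g`. -/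
def MoreBal (f g : ℕ → ℤ) (n : ℕ) : Prop :=
  ∀ k, k ≤ n → (∑ i ∈ Icc 1 k, g i) ≤ ∑ i ∈ Icc 1 k, f i

/-- `f > g` in the balancedness partial order: `f ≥ g` and `f ≠ g` (on indices `1..n`). -/
def StrictMoreBal (f g : ℕ → ℤ) (n : ℕ) : Prop :=
  MoreBal f g n ∧ ∃ i, 1 ≤ i ∧ i ≤ n ∧ f i ≠ g i

/-- `hom(u,v) = Σ_i Σ_j max(0, v_j − u_i + 1)`, the dimension of
`Hom(O(u), O(v))` on `P¹`. -/
def homT (u : ℕ → ℤ) (p : ℕ) (v : ℕ → ℤ) (q : ℕ) : ℤ :=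
  ∑ i ∈ Icc 1 p, ∑ j ∈ Icc 1 q, max 0 (v j - u i + 1)

lemma exists_split (a : ℕ → ℤ) (n : ℕ) (ha : Incr a n) (x : ℤ) :
    ∃ k, k ≤ n ∧ (∀ i, 1 ≤ i → i ≤ k → a i < x) ∧ (∀ i, k < i → i ≤ n → x ≤ a i) ∧
      (∑ i ∈ Icc 1 n, max 0 (x - a i)) = ∑ i ∈ Icc 1 k, (x - a i) := by
  induction n with
  | zero => exact ⟨0, le_refl 0, by omega, by omega, by simp⟩
  | succ n ih =>
    have ha0 : Incr a n := fun i j h1 h2 h3 => ha i j h1 h2 (by omega)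
    obtain ⟨k, hk, hlt, hge, hsum⟩ := ih ha0
    by_cases hx : a (n+1) < x
    · refine ⟨n+1, le_refl _, ?_, by omega, ?_⟩
      · intro i h1 h2
        exact lt_of_le_of_lt (ha i (n+1) h1 h2 (le_refl _)) hx
      · have hk' : k = n := by
          by_contra hne
          have h1 : k < n := lt_of_le_of_ne hk hne
          have h2 := hge (k+1) (by omega) (by omega)
          have h3 := ha (k+1) (n+1) (by omega) (by omega) (le_refl _)
          omega
        rw [Finset.sum_Icc_succ_top (by omega), hsum, hk',
            Finset.sum_Icc_succ_top (by omega), max_eq_right (by omega)]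
    · refine ⟨k, by omega, hlt, ?_, ?_⟩
      · intro i h1 h2
        by_cases hi : i = n + 1
        · subst hi; omega
        · exact hge i h1 (by omega)
      · rw [Finset.sum_Icc_succ_top (by omega), hsum, max_eq_left (by omega), add_zero]

lemma prefix_le (a' : ℕ → ℤ) (n k : ℕ) (hk : k ≤ n) (x : ℤ) :
    (∑ i ∈ Icc 1 k, (x - a' i)) ≤ ∑ i ∈ Icc 1 n, max 0 (x - a' i) :=
  le_trans (Finset.sum_le_sum fun i _ => le_max_right 0 _)
    (Finset.sum_le_sum_of_subset_of_nonneg (Finset.Icc_subset_Icc_right hk)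
      (fun i _ _ => le_max_left 0 _))

lemma weak_ineq (a a' : ℕ → ℤ) (n : ℕ) (ha : Incr a n) (hmb : MoreBal a a' n) (x : ℤ) :
    (∑ i ∈ Icc 1 n, max 0 (x - a i)) ≤ ∑ i ∈ Icc 1 n, max 0 (x - a' i) := by
  obtain ⟨k, hk, _, _, hsum⟩ := exists_split a n ha x
  rw [hsum]
  refine le_trans ?_ (prefix_le a' n k hk x)
  rw [Finset.sum_sub_distrib, Finset.sum_sub_distrib]
  exact sub_le_sub_left (hmb k hk) _

lemma strict_ineq (a a' : ℕ → ℤ) (n k : ℕ) (ha : Incr a n) (ha' : Incr a' n)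
    (hk1 : 1 ≤ k) (hk2 : k ≤ n)
    (hmin : ∀ m, m < k → (∑ i ∈ Icc 1 m, a i) = ∑ i ∈ Icc 1 m, a' i)
    (hak : a' k < a k) :
    (∑ i ∈ Icc 1 n, max 0 (a' k + 1 - a i)) < ∑ i ∈ Icc 1 n, max 0 (a' k + 1 - a' i) := by
  set x : ℤ := a' k + 1 with hx
  obtain ⟨k₀, hk₀n, hlt, hge, hsum⟩ := exists_split a n ha x
  have hk₀ : k₀ < k := by
    by_contra hc
    have := hlt k hk1 (by omega)
    omega
  have heq : (∑ i ∈ Icc 1 k₀, (x - a i)) = ∑ i ∈ Icc 1 k₀, (x - a' i) := by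
    rw [Finset.sum_sub_distrib, Finset.sum_sub_distrib, hmin k₀ hk₀]
  have hsplit : (∑ i ∈ Icc 1 k₀, (x - a' i)) + (∑ i ∈ Icc (k₀+1) k, (x - a' i))
      = ∑ i ∈ Icc 1 k, (x - a' i) := by
    rw [show (1:ℕ) = 0 + 1 from rfl, Finset.Icc_add_one_left_eq_Ioc, Finset.Icc_add_one_left_eq_Ioc,
      show k₀ + (0 + 1) = k₀ + 1 from rfl, Finset.Icc_add_one_left_eq_Ioc]
    exact Finset.sum_Ioc_consecutive _ (by omega) (by omega)
  have htail : (1:ℤ) ≤ ∑ i ∈ Icc (k₀+1) k, (x - a' i) := by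
    have hcard : (Icc (k₀+1) k).card = k - k₀ := by rw [Nat.card_Icc]; omega
    have := Finset.card_nsmul_le_sum (Icc (k₀+1) k) (fun i => x - a' i) 1
      (fun i hi => by
        simp only [Finset.mem_Icc] at hi
        have := ha' i k (by omega) (by omega) hk2
        show (1:ℤ) ≤ x - a' i
        omega)
    rw [hcard, nsmul_eq_mul] at this
    have h1 : (1:ℤ) ≤ (k - k₀ : ℕ) := by exact_mod_cast Nat.one_le_iff_ne_zero.mpr (by omega)
    linarith
  have := prefix_le a' n k hk2 x
  rw [hsum, heq]
  omega

lemma homT_swap (u : ℕ → ℤ) (p : ℕ) (v : ℕ → ℤ) (q : ℕ) :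
    homT u p v q = ∑ j ∈ Icc 1 q, ∑ i ∈ Icc 1 p, max 0 (v j - u i + 1) :=
  Finset.sum_comm

/-- If `a > a'` in the balancedness partial order (same rank and degree),
then `hom(a,a') − end(a') < 0`. -/
theorem stmt7 (n : ℕ) (a a' : ℕ → ℤ)
    (ha : Incr a n) (ha' : Incr a' n)
    (hdeg : degT a n = degT a' n) (h : StrictMoreBal a a' n) :
    homT a n a' n - homT a' n a' n < 0 := by
  obtain ⟨hmb, i₀, hi₀1, hi₀n, hi₀⟩ := h
  classical
  have hdiff : ∀ m : ℕ, 1 ≤ m →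
      (∑ i ∈ Icc 1 m, a i) = (∑ i ∈ Icc 1 m, a' i) →
      (∑ i ∈ Icc 1 (m-1), a i) = (∑ i ∈ Icc 1 (m-1), a' i) → a m = a' m := by
    intro m hm e1 e2
    have hi : m - 1 + 1 = m := by omega
    rw [← hi, Finset.sum_Icc_succ_top (by omega), Finset.sum_Icc_succ_top (by omega), hi] at e1
    omega
  have hex : ∃ m, (∑ i ∈ Icc 1 m, a i) ≠ ∑ i ∈ Icc 1 m, a' i := by
    by_contra hc
    push_neg at hc
    exact hi₀ (hdiff i₀ hi₀1 (hc i₀) (hc (i₀ - 1)))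
  set k := Nat.find hex with hkdef
  have hspec : (∑ i ∈ Icc 1 k, a i) ≠ ∑ i ∈ Icc 1 k, a' i := Nat.find_spec hex
  have hmin : ∀ m, m < k → (∑ i ∈ Icc 1 m, a i) = ∑ i ∈ Icc 1 m, a' i := by
    intro m hm
    by_contra hc
    exact absurd (Nat.find_min' hex hc) (by omega)
  have hk1 : 1 ≤ k := by
    rcases Nat.eq_zero_or_pos k with h0 | h0
    · exfalso; apply hspec; rw [h0]; simp
    · omega
  have hk2 : k ≤ n := by
    by_contra hc
    push_neg at hc
    exact hi₀ (hdiff i₀ hi₀1 (hmin i₀ (by omega)) (hmin (i₀ - 1) (by omega)))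
  have hlt : (∑ i ∈ Icc 1 k, a' i) < ∑ i ∈ Icc 1 k, a i :=
    lt_of_le_of_ne (hmb k hk2) (Ne.symm hspec)
  have hak : a' k < a k := by
    have e2 := hmin (k-1) (by omega)
    have hi : k - 1 + 1 = k := by omega
    rw [← hi, Finset.sum_Icc_succ_top (by omega), Finset.sum_Icc_succ_top (by omega), hi] at hlt
    omega
  rw [homT_swap, homT_swap, sub_neg]
  refine Finset.sum_lt_sum (fun j _ => ?_) ⟨k, Finset.mem_Icc.mpr ⟨hk1, hk2⟩, ?_⟩
  · simp only [sub_add_eq_add_sub]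
    exact weak_ineq a a' n ha hmb (a' j + 1)
  · simp only [sub_add_eq_add_sub]
    exact strict_ineq a a' n k ha ha' hk1 hk2 hmin hak
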